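/- The polynomial p(λ) = −4a²b²·f(λ) is monic of degree 4 with constant coefficient p(0) = 4a²b²r² > 0; consequently the product of the four complex roots of f (counted with multiplicity) equals 4a²b²r². -/

import Mathlib

open Matrix Polynomial

/-- The 4×4 matrix of the elliptic paraboloid x²/a² + y²/b² - z = 0. -/
noncomputable def Pmat (a b : ℝ) : Matrix (Fin 4) (Fin 4) ℝ :=
  !![1/a^2, 0, 0, 0;
     0, 1/b^2, 0, 0;
     0, 0, 0, -(1/2 : ℝ);
     0, 0, -(1/2 : ℝ), 0]

/-- The 4×4 matrix of the sphere (x-x_c)² + (y-y_c)² + (z-z_c)² = r². -/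
noncomputable def Smat (xc yc zc r : ℝ) : Matrix (Fin 4) (Fin 4) ℝ :=
  !![1, 0, 0, -xc;
     0, 1, 0, -yc;
     0, 0, 1, -zc;
     -xc, -yc, -zc, xc^2 + yc^2 + zc^2 - r^2]

/-- The characteristic polynomial f(λ) = det(λP + S), as a real polynomial in λ. -/
noncomputable def charPoly (a b xc yc zc r : ℝ) : Polynomial ℝ :=
  Matrix.det ((X : Polynomial ℝ) • (Pmat a b).map C + (Smat xc yc zc r).map C)

lemma det_fin_four' {R : Type*} [CommRing R] (A : Matrix (Fin 4) (Fin 4) R) :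
    A.det =
      A 0 0 * (A 1 1 * (A 2 2 * A 3 3 - A 2 3 * A 3 2) - A 1 2 * (A 2 1 * A 3 3 - A 2 3 * A 3 1) + A 1 3 * (A 2 1 * A 3 2 - A 2 2 * A 3 1))
    - A 0 1 * (A 1 0 * (A 2 2 * A 3 3 - A 2 3 * A 3 2) - A 1 2 * (A 2 0 * A 3 3 - A 2 3 * A 3 0) + A 1 3 * (A 2 0 * A 3 2 - A 2 2 * A 3 0))
    + A 0 2 * (A 1 0 * (A 2 1 * A 3 3 - A 2 3 * A 3 1) - A 1 1 * (A 2 0 * A 3 3 - A 2 3 * A 3 0) + A 1 3 * (A 2 0 * A 3 1 - A 2 1 * A 3 0))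
    - A 0 3 * (A 1 0 * (A 2 1 * A 3 2 - A 2 2 * A 3 1) - A 1 1 * (A 2 0 * A 3 2 - A 2 2 * A 3 0) + A 1 2 * (A 2 0 * A 3 1 - A 2 1 * A 3 0)) := by
  rw [Matrix.det_succ_row_zero, Fin.sum_univ_four]
  simp [Matrix.det_fin_three, Matrix.submatrix_apply, Fin.sum_univ_succ]
  simp only [show (Fin.succ 2 : Fin 4) = 3 from rfl,
    show Fin.succAbove (1:Fin 4) 2 = 3 from rfl, show Fin.succAbove (2:Fin 4) 1 = 1 from rfl,
    show Fin.succAbove (2:Fin 4) 2 = 3 from rfl, show Fin.succAbove (3:Fin 4) 1 = 1 from rfl,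
    show Fin.succAbove (3:Fin 4) 2 = 2 from rfl,
    show ((3:Fin 4):ℕ) = 3 from rfl, show (Fin.castSucc (2:Fin 3) : Fin 4) = 2 from rfl,
    show ((⟨2, by norm_num⟩:Fin 4)) = 2 from rfl, show ((⟨3, by norm_num⟩:Fin 4)) = 3 from rfl]
  norm_num
  ring

lemma key (a b xc yc zc r : ℝ) (ha : a ≠ 0) (hb : b ≠ 0) :
    C (-(4*a^2*b^2)) * charPoly a b xc yc zc r =
    X^4 + C (4*zc + a^2 + b^2) * X^3
      + C (-4*(xc^2+yc^2-r^2) + 4*zc*(a^2+b^2) + a^2*b^2) * X^2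
      + C (-4*(a^2+b^2)*(xc^2+yc^2-r^2) + 4*a^2*b^2*zc + 4*b^2*yc^2 + 4*a^2*xc^2) * X
      + C (4*a^2*b^2*r^2) := by
  apply Polynomial.funext
  intro x
  simp only [charPoly, Pmat, Smat, det_fin_four', Matrix.map_apply, Matrix.add_apply,
    Matrix.smul_apply, Matrix.cons_val', Matrix.cons_val_zero, Matrix.cons_val_one,
    Matrix.head_cons, Matrix.empty_val', Matrix.cons_val_fin_one, Matrix.head_fin_const,
    Matrix.cons_val_two, Matrix.tail_cons, Matrix.cons_val_three, smul_eq_mul, Matrix.vecHead, Matrix.vecTail, Function.comp,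
    eval_add, eval_mul, eval_sub, eval_pow, eval_C, eval_X, eval_neg, eval_one]
  norm_num [Matrix.vecHead, Matrix.vecTail, Matrix.cons_val]
  simp only [Matrix.cons_val_succ', Matrix.cons_val]
  field_simp
  ring

/-- p(λ) = -4a²b²·f(λ) is monic of degree 4 with p(0) = 4a²b²r² > 0,
and the product of the four complex characteristic roots (with multiplicity)
equals 4a²b²r². -/
theorem charPoly_monic_and_root_prod (a b r xc yc zc : ℝ)
    (ha : 0 < a) (hab : a ≤ b) (hr : 0 < r) :
    (C (-(4*a^2*b^2)) * charPoly a b xc yc zc r).Monic ∧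
    (C (-(4*a^2*b^2)) * charPoly a b xc yc zc r).natDegree = 4 ∧
    (C (-(4*a^2*b^2)) * charPoly a b xc yc zc r).eval 0 = 4*a^2*b^2*r^2 ∧
    0 < 4*a^2*b^2*r^2 ∧
    Multiset.card (((charPoly a b xc yc zc r).map (algebraMap ℝ ℂ)).roots) = 4 ∧
    (((charPoly a b xc yc zc r).map (algebraMap ℝ ℂ)).roots).prod
      = ((4*a^2*b^2*r^2 : ℝ) : ℂ) := by
  have ha0 : a ≠ 0 := ne_of_gt ha
  have hb0 : b ≠ 0 := ne_of_gt (lt_of_lt_of_le ha hab)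
  have hkey := key a b xc yc zc r ha0 hb0
  have hmonic : (C (-(4*a^2*b^2)) * charPoly a b xc yc zc r).Monic := by
    rw [hkey]; monicity!
  have hdeg : (C (-(4*a^2*b^2)) * charPoly a b xc yc zc r).natDegree = 4 := by
    rw [hkey]; compute_degree!
  have heval : (C (-(4*a^2*b^2)) * charPoly a b xc yc zc r).eval 0 = 4*a^2*b^2*r^2 := by
    rw [hkey]; simp
  have hpos : (0:ℝ) < 4*a^2*b^2*r^2 := by positivity
  -- complex side
  set p := C (-(4*a^2*b^2)) * charPoly a b xc yc zc r with hp
  have hc0 : (-(4*a^2*b^2)) ≠ 0 := by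
    have : (0:ℝ) < 4*a^2*b^2 := by positivity
    simpa using ne_of_gt this
  have hmapC : p.map (algebraMap ℝ ℂ)
      = C ((algebraMap ℝ ℂ) (-(4*a^2*b^2))) * (charPoly a b xc yc zc r).map (algebraMap ℝ ℂ) := by
    rw [hp, Polynomial.map_mul, Polynomial.map_C]
  have hcz : ((algebraMap ℝ ℂ) (-(4*a^2*b^2))) ≠ 0 := by
    simpa using hc0
  have hroots : (p.map (algebraMap ℝ ℂ)).roots = ((charPoly a b xc yc zc r).map (algebraMap ℝ ℂ)).roots := by
    rw [hmapC, Polynomial.roots_C_mul _ hcz]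
  have hpm : (p.map (algebraMap ℝ ℂ)).Monic := hmonic.map _
  have hsplits : (p.map (algebraMap ℝ ℂ)).Splits :=
    IsAlgClosed.splits _
  have hdegm : (p.map (algebraMap ℝ ℂ)).natDegree = 4 := by
    rw [hmonic.natDegree_map, hdeg]
  have hcard : Multiset.card ((p.map (algebraMap ℝ ℂ)).roots) = 4 := by
    rw [Polynomial.splits_iff_card_roots.mp hsplits, hdegm]
  have hprod := hsplits.coeff_zero_eq_prod_roots_of_monic hpm
  rw [hdegm] at hprod
  have hc0' : (p.map (algebraMap ℝ ℂ)).coeff 0 = ((4*a^2*b^2*r^2 : ℝ) : ℂ) := by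
    rw [Polynomial.coeff_map, Polynomial.coeff_zero_eq_eval_zero, heval]
    rfl
  refine ⟨hmonic, hdeg, heval, hpos, ?_, ?_⟩
  · rw [← hroots]; exact hcard
  · rw [← hroots]
    have : ((-1:ℂ))^4 = 1 := by norm_num
    rw [this, one_mul] at hprod
    rw [← hprod, hc0']
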